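/- Let F be a field with char F ≠ 2 and char F ≠ 3, let α₁,α₂,α₄,β₁ ∈ F, and let A = A₁(α₁,α₂,α₄,β₁) = [[α₁, α₂, 1+α₂, α₄],[β₁, -α₁, 1-α₁, -α₂]]. Then the only invertible 2×2 matrix g over F with gA = A(g⊗g) is the identity matrix, and the only 2×2 matrix D over F with DA = A(D⊗I₂ + I₂⊗D) is the zero matrix. -/
import Mathlib


open Matrix Kronecker

/-- The matrix of structure constants (MSC) of a 2-dimensional algebra, as a
`2 × (2 × 2)` matrix: the column indexed by `(j,k)` corresponds to the product
`e_j · e_k`, so the columns in order `(0,0), (0,1), (1,0), (1,1)` carry the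
entries `α₁ α₂ α₃ α₄` (first row) and `β₁ β₂ β₃ β₄` (second row). -/
def MSC {F : Type*} [Field F] (a1 a2 a3 a4 b1 b2 b3 b4 : F) :
    Matrix (Fin 2) (Fin 2 × Fin 2) F :=
  Matrix.of fun i j => !![a1, a2, a3, a4; b1, b2, b3, b4] i (finProdFinEquiv j)

/-- `g` is an automorphism matrix of the algebra with MSC `A`:
`g` is invertible and `g • A = A • (g ⊗ g)`. -/
def IsAutoMat {F : Type*} [Field F] (A : Matrix (Fin 2) (Fin 2 × Fin 2) F)
    (g : Matrix (Fin 2) (Fin 2) F) : Prop :=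
  IsUnit g ∧ g * A = A * (g ⊗ₖ g)

/-- `D` is a derivation matrix of the algebra with MSC `A`:
`D • A = A • (D ⊗ I + I ⊗ D)`. -/
def IsDerMat {F : Type*} [Field F] (A : Matrix (Fin 2) (Fin 2 × Fin 2) F)
    (D : Matrix (Fin 2) (Fin 2) F) : Prop :=
  D * A = A * (D ⊗ₖ (1 : Matrix (Fin 2) (Fin 2) F) + (1 : Matrix (Fin 2) (Fin 2) F) ⊗ₖ D)

theorem stmt_2 {F : Type*} [Field F] (h2 : ringChar F ≠ 2) (h3 : ringChar F ≠ 3)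
    (a1 a2 a4 b1 : F)
    (A : Matrix (Fin 2) (Fin 2 × Fin 2) F)
    (hA : A = MSC a1 a2 (1 + a2) a4 b1 (-a1) (1 - a1) (-a2)) :
    (∀ g : Matrix (Fin 2) (Fin 2) F, IsAutoMat A g ↔ g = 1) ∧
    (∀ D : Matrix (Fin 2) (Fin 2) F, IsDerMat A D ↔ D = 0) := by
  subst hA
  have e00 : finProdFinEquiv ((0:Fin 2),(0:Fin 2)) = (0 : Fin 4) := rfl
  have e01 : finProdFinEquiv ((0:Fin 2),(1:Fin 2)) = (1 : Fin 4) := rfl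
  have e10 : finProdFinEquiv ((1:Fin 2),(0:Fin 2)) = (2 : Fin 4) := rfl
  have e11 : finProdFinEquiv ((1:Fin 2),(1:Fin 2)) = (3 : Fin 4) := rfl
  constructor
  · intro g
    constructor
    · rintro ⟨hg, hm⟩
      have hdet : (g 0 0 * g 1 1 - g 0 1 * g 1 0) ≠ 0 := by
        have := ((Matrix.isUnit_iff_isUnit_det g).mp hg).ne_zero
        rwa [Matrix.det_fin_two] at this
      set t : F := (g 0 0 * g 1 1 - g 0 1 * g 1 0)⁻¹ with ht
      have hT : (g 0 0 * g 1 1 - g 0 1 * g 1 0) * t = 1 := mul_inv_cancel₀ hdet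
      have h := fun i jk => congrFun (congrFun hm i) jk
      have hA00 := h 0 (0,0); have hB00 := h 1 (0,0)
      have hA01 := h 0 (0,1); have hB01 := h 1 (0,1)
      have hA10 := h 0 (1,0); have hB10 := h 1 (1,0)
      have hA11 := h 0 (1,1); have hB11 := h 1 (1,1)
      simp only [Matrix.mul_apply, Fin.sum_univ_two, MSC, Matrix.kroneckerMap_apply,
        Fintype.sum_prod_type, Matrix.of_apply, e00, e01, e10, e11,
        Matrix.cons_val', Matrix.cons_val_zero, Matrix.cons_val_one, Matrix.cons_val_two,
        Matrix.cons_val_three, Matrix.tail_cons, Matrix.vecHead, Matrix.vecTail, Function.comp_apply, Fin.succ_zero_eq_one, Fin.succ_one_eq_two, Matrix.cons_val_succ,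
        Matrix.head_cons, Matrix.empty_val', Matrix.cons_val_fin_one,
        Fin.isValue] at hA00 hB00 hA01 hB01 hA10 hB10 hA11 hB11
      have k00 : g 0 0 = 1 := by
        linear_combination (-t * g 1 1) * hA00 + (t * g 0 1) * hB00 + (t * g 1 0) * hA10
          + (-t * g 0 0) * hB10 + (-(g 0 0 - 1)) * hT
      have k01 : g 0 1 = 0 := by
        linear_combination (-t * g 1 1) * hA01 + (t * g 0 1) * hB01 + (t * g 1 0) * hA11
          + (-t * g 0 0) * hB11 + (-(g 0 1)) * hT
      have k10 : g 1 0 = 0 := by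
        linear_combination (-t * g 1 1) * hA00 + (t * g 0 1) * hB00 + (t * g 1 0) * hA01
          + (-t * g 0 0) * hB01 + (-(g 1 0)) * hT
      have k11 : g 1 1 = 1 := by
        linear_combination (-t * g 1 1) * hA10 + (t * g 0 1) * hB10 + (t * g 1 0) * hA11
          + (-t * g 0 0) * hB11 + (-(g 1 1 - 1)) * hT
      ext i j
      fin_cases i <;> fin_cases j
      · simpa using k00
      · simpa using k01
      · simpa using k10
      · simpa using k11
    · rintro rfl
      refine ⟨isUnit_one, ?_⟩
      rw [show ((1 : Matrix (Fin 2) (Fin 2) F) ⊗ₖ (1 : Matrix (Fin 2) (Fin 2) F)) = 1 from Matrix.one_kronecker_one]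
      simp
  · intro D
    constructor
    · intro hm
      unfold IsDerMat at hm
      have h := fun i jk => congrFun (congrFun hm i) jk
      have hA00 := h 0 (0,0); have hB00 := h 1 (0,0)
      have hA01 := h 0 (0,1); have hB01 := h 1 (0,1)
      have hA10 := h 0 (1,0); have hB10 := h 1 (1,0)
      have hA11 := h 0 (1,1); have hB11 := h 1 (1,1)
      simp only [Matrix.mul_apply, Fin.sum_univ_two, MSC, Matrix.kroneckerMap_apply,
        Matrix.add_apply, Matrix.one_apply, Fintype.sum_prod_type, Matrix.of_apply,
        e00, e01, e10, e11, Matrix.cons_val', Matrix.cons_val_zero, Matrix.cons_val_one,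
        Matrix.cons_val_two, Matrix.cons_val_three, Matrix.tail_cons, Matrix.vecHead, Matrix.vecTail, Function.comp_apply, Fin.succ_zero_eq_one, Fin.succ_one_eq_two, Matrix.cons_val_succ, Matrix.head_cons,
        Matrix.empty_val', Matrix.cons_val_fin_one, Fin.isValue,
        if_true, one_ne_zero, zero_ne_one, if_false, Fin.reduceEq, ite_true, ite_false,
        mul_one, mul_zero, add_zero, zero_add] at hA00 hB00 hA01 hB01 hA10 hB10 hA11 hB11
      have k00 : D 0 0 = 0 := by linear_combination (-1 : F) * hA00 + (-1 : F) * hB10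
      have k01 : D 0 1 = 0 := by linear_combination (-1 : F) * hA01 + (-1 : F) * hB11
      have k10 : D 1 0 = 0 := by linear_combination (-1 : F) * hA00 + (-1 : F) * hB01
      have k11 : D 1 1 = 0 := by linear_combination (-1 : F) * hA10 + (-1 : F) * hB11
      ext i j
      fin_cases i <;> fin_cases j
      · simpa using k00
      · simpa using k01
      · simpa using k10
      · simpa using k11
    · rintro rfl
      unfold IsDerMat
      simp
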